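/- If λ₁, …, λ_d are complex numbers with |λ_j| = 1 for all j, and the polynomial p(x) = ∏_{j=1}^d (x - λ_j) has integer coefficients, then every λ_j is a root of unity. -/

import Mathlib

open Polynomial IntermediateField in
/-- Kronecker's lemma: if `λ₁, …, λ_d` are complex numbers of modulus 1 such that
`p(x) = ∏ (x - λ_j)` has integer coefficients, then each `λ_j` is a root of unity. -/
theorem kronecker_lemma (d : ℕ) (lam : Fin d → ℂ)
    (hmod : ∀ j, ‖lam j‖ = 1)
    (hint : ∀ n : ℕ, ∃ z : ℤ,
      (∏ j : Fin d, (Polynomial.X - Polynomial.C (lam j))).coeff n = (z : ℂ)) :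
    ∀ j, ∃ n : ℕ, 0 < n ∧ lam j ^ n = 1 := by
  classical
  intro j
  set p : Polynomial ℂ := ∏ j : Fin d, (Polynomial.X - Polynomial.C (lam j)) with hp
  have hpmonic : p.Monic := monic_prod_of_monic _ _ fun i _ => monic_X_sub_C _
  have hlift : p ∈ Polynomial.lifts (Int.castRingHom ℂ) := by
    rw [Polynomial.lifts_iff_coeff_lifts]
    intro n; obtain ⟨z, hz⟩ := hint n; exact ⟨z, by simpa using hz.symm⟩
  obtain ⟨q, hq, hqdeg, hqmonic⟩ := Polynomial.lifts_and_degree_eq_and_monic hlift hpmonic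
  set x := lam j with hx
  have hqx : Polynomial.aeval x q = 0 := by
    have : p.eval x = 0 := by
      rw [hp, Polynomial.eval_prod]
      exact Finset.prod_eq_zero (Finset.mem_univ j) (by simp [hx])
    rw [Polynomial.aeval_def, ← Polynomial.eval_map]
    exact hq ▸ this
  have hxint : IsIntegral ℤ x := ⟨q, hqmonic, hqx⟩
  have hxQ : IsIntegral ℚ x := hxint.tower_top
  haveI : FiniteDimensional ℚ ℚ⟮x⟯ := IntermediateField.adjoin.finiteDimensional hxQ
  haveI : NumberField ℚ⟮x⟯ := ⟨⟩
  set ξ : ℚ⟮x⟯ := IntermediateField.AdjoinSimple.gen ℚ x with hξdef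
  have hξ : (algebraMap ℚ⟮x⟯ ℂ) ξ = x := rfl
  have hξint : IsIntegral ℤ ξ :=
    (isIntegral_algebraMap_iff (algebraMap ℚ⟮x⟯ ℂ).injective).mp (hξ.symm ▸ hxint)
  have hξq : Polynomial.aeval ξ q = 0 := by
    apply (algebraMap ℚ⟮x⟯ ℂ).injective
    rw [map_zero, ← Polynomial.aeval_algebraMap_apply, hξ, hqx]
  have hnorm : ∀ φ : ℚ⟮x⟯ →+* ℂ, ‖φ ξ‖ = 1 := by
    intro φ
    have h0 : Polynomial.aeval (φ ξ) q = 0 := by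
      rw [show φ ξ = φ.toIntAlgHom ξ from rfl, Polynomial.aeval_algHom_apply, hξq, map_zero]
    have hev : p.eval (φ ξ) = 0 := by
      rw [← hq, Polynomial.eval_map]; exact h0
    rw [hp, Polynomial.eval_prod] at hev
    obtain ⟨i, -, hi⟩ := Finset.prod_eq_zero_iff.mp hev
    simp only [Polynomial.eval_sub, Polynomial.eval_X, Polynomial.eval_C, sub_eq_zero] at hi
    rw [hi, hmod i]
  obtain ⟨n, hn, hpow⟩ :=
    NumberField.Embeddings.pow_eq_one_of_norm_eq_one ℚ⟮x⟯ ℂ hξint hnorm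
  exact ⟨n, hn, by rw [← hξ, ← map_pow, hpow, map_one]⟩
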